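/- Let a : Fin n → ℤ be totally positive normalized, let Δ = Δ_0 ∩ Δ_a, and let μ be a K-algebra automorphism of Mₙ(K) such that the map D ↦ μ(D) sends the set of maximal R-orders of Mₙ(K) containing Δ bijectively onto itself. Then either (μ(Δ_0) = Δ_0 and μ(Δ_a) = Δ_a) or (μ(Δ_0) = Δ_a and μ(Δ_a) = Δ_0). (Split case, B = K, of the Lemma: an automorphism μ of the algebra with μ(S₀(Δ)) = S₀(Δ) satisfies {μ(Δ₀), μ(Δ_[b])} = {Δ₀, Δ_[b]}.) -/

import Mathlib

set_option linter.unusedSectionVars false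
set_option linter.unusedVariables false


variable (R K : Type*) [CommRing R] [IsDomain R] [IsDiscreteValuationRing R]
  [Field K] [Algebra R K] [IsFractionRing R K]

/-- The order `Δ_a` in `Mₙ(K)`: matrices `X` with `π^(a j - a i) * X i j ∈ R` for all `i, j`. -/
def Delta (π : R) {n : ℕ} (a : Fin n → ℤ) : Set (Matrix (Fin n) (Fin n) K) :=
  {X | ∀ i j, (algebraMap R K π) ^ (a j - a i) * X i j ∈ (algebraMap R K).range}

/-- An `R`-order in `Mₙ(K)`: an `R`-subalgebra, finitely generated as an `R`-module,
spanning `Mₙ(K)` over `K`. -/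
def IsOrder {n : ℕ} (D : Subalgebra R (Matrix (Fin n) (Fin n) K)) : Prop :=
  (Subalgebra.toSubmodule D).FG ∧
    Submodule.span K (D : Set (Matrix (Fin n) (Fin n) K)) = ⊤

/-- A maximal `R`-order in `Mₙ(K)`. -/
def IsMaximalOrder {n : ℕ} (D : Subalgebra R (Matrix (Fin n) (Fin n) K)) : Prop :=
  IsOrder R K D ∧ ∀ D' : Subalgebra R (Matrix (Fin n) (Fin n) K),
    IsOrder R K D' → D ≤ D' → D' = D

section Aux
variable {R K : Type*} [CommRing R] [IsDomain R] [IsDiscreteValuationRing R]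
  [Field K] [Algebra R K] [IsFractionRing R K]

variable (π : R)

/-- `vle π m x` means the valuation of `x` is at least `m`. -/
def vle (m : ℤ) (x : K) : Prop :=
  (algebraMap R K π) ^ (-m) * x ∈ (algebraMap R K).range

variable {π}

theorem hp_ne_zero (hπ : Irreducible π) : (algebraMap R K π) ≠ 0 := by
  have h0 : π ≠ 0 := hπ.ne_zero
  exact fun h => h0 (IsFractionRing.injective R K (by rw [h, map_zero]))

theorem vle_zero (m : ℤ) : vle π m (0 : K) := by
  simp [vle]

theorem vle_of_le (hπ : Irreducible π) {m m' : ℤ} {x : K} (h : m' ≤ m) (hx : vle π m x) :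
    vle π m' x := by
  obtain ⟨r, hr⟩ := hx
  refine ⟨π ^ (m - m').toNat * r, ?_⟩
  have hp := hp_ne_zero (K := K) hπ
  have : (algebraMap R K π) ^ (-m') = (algebraMap R K π) ^ ((m - m').toNat : ℤ) *
      (algebraMap R K π) ^ (-m) := by
    rw [← zpow_add₀ hp]
    congr 1
    omega
  rw [map_mul, map_pow, hr, this, ← zpow_natCast]
  ring

theorem vle_add (hπ : Irreducible π) {m : ℤ} {x y : K} (hx : vle π m x) (hy : vle π m y) :
    vle π m (x + y) := by
  obtain ⟨r, hr⟩ := hx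
  obtain ⟨s, hs⟩ := hy
  exact ⟨r + s, by rw [map_add, hr, hs, mul_add]⟩

theorem vle_mul (hπ : Irreducible π) {m m' : ℤ} {x y : K} (hx : vle π m x) (hy : vle π m' y) :
    vle π (m + m') (x * y) := by
  obtain ⟨r, hr⟩ := hx
  obtain ⟨s, hs⟩ := hy
  refine ⟨r * s, ?_⟩
  have hp := hp_ne_zero (K := K) hπ
  rw [map_mul, hr, hs, neg_add, zpow_add₀ hp]
  ring

theorem vle_algebraMap (r : R) : vle π 0 (algebraMap R K r) := ⟨r, by simp⟩

theorem vle_zpow (hπ : Irreducible π) {m t : ℤ} :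
    vle π m ((algebraMap R K π) ^ t) ↔ m ≤ t := by
  have hp := hp_ne_zero (K := K) hπ
  constructor
  · intro ⟨r, hr⟩
    by_contra hlt
    push_neg at hlt
    have h1 : (algebraMap R K) (π ^ (m - t).toNat * r) = 1 := by
      rw [map_mul, map_pow, hr, ← zpow_natCast, ← mul_assoc, ← zpow_add₀ hp, ← zpow_add₀ hp]
      rw [show ((m - t).toNat : ℤ) + -m + t = 0 by omega, zpow_zero]
    have h2 : π ^ (m - t).toNat * r = 1 := IsFractionRing.injective R K (by rw [h1, map_one])
    have hdvd : π ∣ 1 := by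
      refine ⟨π ^ ((m - t).toNat - 1) * r, ?_⟩
      rw [← h2, ← mul_assoc, ← pow_succ']
      congr 2
      omega
    exact hπ.not_isUnit (isUnit_of_dvd_one hdvd)
  · intro h
    refine ⟨π ^ (t - m).toNat, ?_⟩
    rw [map_pow, ← zpow_natCast, ← zpow_add₀ hp]
    congr 1
    omega

theorem vle_sum (hπ : Irreducible π) {m : ℤ} {α : Type*} (s : Finset α) (f : α → K)
    (h : ∀ i ∈ s, vle π m (f i)) : vle π m (∑ i ∈ s, f i) := by
  classical
  induction s using Finset.induction_on with
  | empty => simpa using vle_zero m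
  | insert _ _ hns ih =>
    rw [Finset.sum_insert hns]
    exact vle_add hπ (h _ (Finset.mem_insert_self _ _))
      (ih fun i hi => h i (Finset.mem_insert_of_mem hi))

/-- From an exact valuation, get a unit decomposition. -/
theorem exists_unit_of_exact (hπ : Irreducible π) {m : ℤ} {x : K}
    (h1 : vle π m x) (h2 : ¬ vle π (m + 1) x) :
    ∃ u : Rˣ, x = algebraMap R K u * (algebraMap R K π) ^ m := by
  obtain ⟨r, hr⟩ := h1
  have hp := hp_ne_zero (K := K) hπ
  have hndvd : ¬ π ∣ r := by
    rintro ⟨s, rfl⟩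
    apply h2
    refine ⟨s, ?_⟩
    rw [map_mul] at hr
    have : (algebraMap R K π) ^ (-(m + 1)) * x
        = (algebraMap R K π)⁻¹ * ((algebraMap R K π) ^ (-m) * x) := by
      rw [← mul_assoc, ← zpow_neg_one, ← zpow_add₀ hp, show (-1 : ℤ) + -m = -(m+1) by omega]
    rw [this, ← hr, ← mul_assoc, inv_mul_cancel₀ hp, one_mul]
  have hrunit : IsUnit r := by
    by_contra hnu
    apply hndvd
    have hmem : r ∈ IsLocalRing.maximalIdeal R := (IsLocalRing.mem_maximalIdeal r).mpr hnu
    rwa [(IsDiscreteValuationRing.irreducible_iff_uniformizer π).mp hπ,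
      Ideal.mem_span_singleton] at hmem
  obtain ⟨u, hu⟩ := hrunit
  refine ⟨u, ?_⟩
  have hp := hp_ne_zero (K := K) hπ
  rw [hu, hr, mul_comm, ← mul_assoc, ← zpow_add₀ hp, add_neg_cancel, zpow_zero, one_mul]


theorem map_unit_mul_inv (u : Rˣ) :
    algebraMap R K ((u⁻¹ : Rˣ) : R) * algebraMap R K (u : R) = 1 := by
  rw [← map_mul, Units.inv_mul, map_one]

/-- Exact form `u * π^m`. -/
theorem vle_unit_zpow (hπ : Irreducible π) (u : Rˣ) (m t : ℤ) :
    vle π t (algebraMap R K u * (algebraMap R K π) ^ m) ↔ t ≤ m := by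
  have hp := hp_ne_zero (K := K) hπ
  constructor
  · intro h
    by_contra hlt
    push_neg at hlt
    obtain ⟨r, hr⟩ := h
    have key : (algebraMap R K) (π ^ (t - m).toNat * ((u⁻¹ : Rˣ) : R) * r) = 1 := by
      rw [map_mul, map_mul, map_pow, hr, ← zpow_natCast,
        show (((t - m).toNat : ℕ) : ℤ) = t - m by omega]
      calc (algebraMap R K) π ^ (t - m) * (algebraMap R K) ((u⁻¹ : Rˣ) : R) *
            ((algebraMap R K) π ^ (-t) * ((algebraMap R K) (u : R) * (algebraMap R K) π ^ m))
          = (algebraMap R K) π ^ (t - m) * (algebraMap R K) π ^ (-t) * (algebraMap R K) π ^ m *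
            ((algebraMap R K) ((u⁻¹ : Rˣ) : R) * (algebraMap R K) (u : R)) := by ring
        _ = 1 := by
            rw [← zpow_add₀ hp, ← zpow_add₀ hp, show t - m + -t + m = 0 by omega, zpow_zero,
              map_unit_mul_inv, one_mul]
    have h2 : π ^ (t - m).toNat * ((u⁻¹ : Rˣ) : R) * r = 1 :=
      IsFractionRing.injective R K (by rw [key, map_one])
    have hdvd : π ∣ 1 := by
      refine ⟨π ^ ((t - m).toNat - 1) * ((u⁻¹ : Rˣ) : R) * r, ?_⟩
      rw [← h2, show π ^ (t - m).toNat = π * π ^ ((t - m).toNat - 1) by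
        rw [← pow_succ']; congr 1; omega]
      ring
    exact hπ.not_isUnit (isUnit_of_dvd_one hdvd)
  · intro h
    refine ⟨(u : R) * π ^ (m - t).toNat, ?_⟩
    rw [map_mul, map_pow, ← zpow_natCast, show (((m - t).toNat : ℕ) : ℤ) = m - t by omega]
    calc (algebraMap R K) (u : R) * (algebraMap R K) π ^ (m - t)
        = (algebraMap R K) π ^ (m - t) * (algebraMap R K) (u : R) := by ring
      _ = (algebraMap R K) π ^ (-t) * ((algebraMap R K) (u : R) * (algebraMap R K) π ^ m) := by
          rw [show (algebraMap R K) π ^ (m - t)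
              = (algebraMap R K) π ^ (-t) * (algebraMap R K) π ^ m by
            rw [← zpow_add₀ hp]; congr 1; omega]
          ring

theorem exists_exact (hπ : Irreducible π) {x : K} (hx : x ≠ 0) :
    ∃ (m : ℤ) (u : Rˣ), x = algebraMap R K u * (algebraMap R K π) ^ m := by
  obtain ⟨r, s, hs, rfl⟩ := IsFractionRing.div_surjective (A := R) x
  have hr : r ≠ 0 := by
    rintro rfl
    simp at hx
  have hs0 : s ≠ 0 := nonZeroDivisors.ne_zero hs
  obtain ⟨k1, u1, hu1⟩ := IsDiscreteValuationRing.eq_unit_mul_pow_irreducible hr hπ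
  obtain ⟨k2, u2, hu2⟩ := IsDiscreteValuationRing.eq_unit_mul_pow_irreducible hs0 hπ
  have hp := hp_ne_zero (K := K) hπ
  have hsne : (algebraMap R K) s ≠ 0 := fun h =>
    hs0 (IsFractionRing.injective R K (by rw [h, map_zero]))
  refine ⟨(k1 : ℤ) - k2, u1 * u2⁻¹, ?_⟩
  rw [div_eq_iff hsne, hu1, hu2]
  push_cast [map_mul, map_pow]
  rw [← zpow_natCast ((algebraMap R K) π) k1, ← zpow_natCast ((algebraMap R K) π) k2, eq_comm]
  calc (algebraMap R K) (u1 : R) * (algebraMap R K) ((u2⁻¹ : Rˣ) : R) *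
        (algebraMap R K) π ^ ((k1 : ℤ) - k2) *
        ((algebraMap R K) (u2 : R) * (algebraMap R K) π ^ (k2 : ℤ))
      = (algebraMap R K) (u1 : R) *
        ((algebraMap R K) ((u2⁻¹ : Rˣ) : R) * (algebraMap R K) (u2 : R)) *
        ((algebraMap R K) π ^ ((k1 : ℤ) - k2) * (algebraMap R K) π ^ (k2 : ℤ)) := by ring
    _ = (algebraMap R K) (u1 : R) * (algebraMap R K) π ^ (k1 : ℤ) := by
        rw [map_unit_mul_inv, mul_one, ← zpow_add₀ hp, show (k1 : ℤ) - k2 + k2 = k1 by omega]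


theorem exists_vle (hπ : Irreducible π) (x : K) : ∃ m : ℤ, vle π m x := by
  by_cases hx : x = 0
  · exact ⟨0, hx ▸ vle_zero 0⟩
  · obtain ⟨m, u, rfl⟩ := exists_exact hπ hx
    exact ⟨m, (vle_unit_zpow hπ u m m).mpr le_rfl⟩

theorem exists_forall_le {α : Type*} (s : Finset α) (f : α → ℤ) :
    ∃ N : ℤ, ∀ x ∈ s, N ≤ f x := by
  classical
  induction s using Finset.induction_on with
  | empty => exact ⟨0, by simp⟩
  | @insert y s hns ih =>
    obtain ⟨N, hN⟩ := ih
    exact ⟨min N (f y), fun x hx => by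
      rcases Finset.mem_insert.mp hx with rfl | hx
      · exact min_le_right _ _
      · exact le_trans (min_le_left _ _) (hN x hx)⟩

end Aux

section MatrixAux

variable {R K : Type*} [CommRing R] [IsDomain R] [IsDiscreteValuationRing R]
  [Field K] [Algebra R K] [IsFractionRing R K]
variable {π : R} {n : ℕ}

open Matrix

theorem E_mul_mul_E (X : Matrix (Fin n) (Fin n) K) (i j : Fin n) :
    Matrix.single i i (1 : K) * X * Matrix.single j j (1 : K) =
      Matrix.single i j (X i j) := by
  ext a b
  by_cases ha : a = i <;> by_cases hb : b = j
  · subst_vars; simp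
  · subst_vars; simp [hb, Ne.symm hb]
  · subst_vars; simp [ha, Ne.symm ha]
  · simp [ha, hb, Ne.symm ha, Ne.symm hb]

theorem stdBasis_pow (i : Fin n) (y : K) (k : ℕ) (hk : 1 ≤ k) :
    (Matrix.single i i y) ^ k = Matrix.single i i (y ^ k) := by
  induction k with
  | zero => omega
  | succ k ih =>
    rcases Nat.eq_or_lt_of_le hk with h | h
    · simp [← h]
    · rw [pow_succ, ih (by omega), Matrix.single_mul_single_same, ← pow_succ]

theorem mem_Delta_iff (a : Fin n → ℤ) (X : Matrix (Fin n) (Fin n) K) :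
    X ∈ Delta R K π a ↔ ∀ i j, vle π (a i - a j) (X i j) := by
  unfold Delta vle
  constructor <;> intro h i j <;> have := h i j <;> rwa [neg_sub] at *

theorem stdBasis_mem_Delta_iff (hπ : Irreducible π) (a : Fin n → ℤ) (i j : Fin n) (c : K) :
    Matrix.single i j c ∈ Delta R K π a ↔ vle π (a i - a j) c := by
  rw [mem_Delta_iff]
  constructor
  · intro h
    have := h i j
    rwa [Matrix.single_apply_same] at this
  · intro h i' j'
    by_cases hij : i = i' ∧ j = j'
    · obtain ⟨rfl, rfl⟩ := hij
      rwa [Matrix.single_apply_same]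
    · rw [Matrix.single_apply_of_ne _ _ _ _ _ hij]
      exact vle_zero _

/-- The subalgebra with carrier `Delta`. -/
def DeltaAlg (hπ : Irreducible π) (a : Fin n → ℤ) : Subalgebra R (Matrix (Fin n) (Fin n) K) where
  carrier := Delta R K π a
  mul_mem' {X Y} hX hY := by
    rw [mem_Delta_iff] at *
    intro i j
    rw [Matrix.mul_apply]
    refine vle_sum hπ _ _ fun k _ => ?_
    have := vle_mul hπ (hX i k) (hY k j)
    rwa [show a i - a k + (a k - a j) = a i - a j by ring] at this
  one_mem' := by
    rw [mem_Delta_iff]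
    intro i j
    by_cases hij : i = j
    · subst hij
      rw [Matrix.one_apply_eq, show (1 : K) = algebraMap R K 1 by rw [_root_.map_one],
        show a i - a i = 0 by ring]
      exact vle_algebraMap 1
    · rw [Matrix.one_apply_ne hij]
      exact vle_zero _
  add_mem' {X Y} hX hY := by
    rw [mem_Delta_iff] at *
    intro i j
    exact vle_add hπ (hX i j) (hY i j)
  zero_mem' := by
    rw [mem_Delta_iff]
    intro i j
    exact vle_zero _
  algebraMap_mem' r := by
    rw [mem_Delta_iff]
    intro i j
    rw [Matrix.algebraMap_matrix_apply]
    by_cases hij : i = j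
    · subst hij
      rw [if_pos rfl, show a i - a i = 0 by ring]
      exact vle_algebraMap r
    · rw [if_neg hij]
      exact vle_zero _

theorem coe_DeltaAlg (hπ : Irreducible π) (a : Fin n → ℤ) :
    (DeltaAlg (K := K) hπ a : Set (Matrix (Fin n) (Fin n) K)) = Delta R K π a := rfl


theorem one_mem_range : vle π 0 (1 : K) := by
  rw [← _root_.map_one (algebraMap R K)]
  exact vle_algebraMap 1

theorem E_mem_Delta (hπ : Irreducible π) (a : Fin n → ℤ) (i : Fin n) :
    Matrix.single i i (1 : K) ∈ Delta R K π a := by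
  rw [stdBasis_mem_Delta_iff hπ, sub_self]
  exact one_mem_range

theorem stdBasis_zpow_mem_Delta (hπ : Irreducible π) (a : Fin n → ℤ) (i j : Fin n) {t : ℤ}
    (ht : a i - a j ≤ t) : Matrix.single i j ((algebraMap R K π) ^ t) ∈ Delta R K π a := by
  rw [stdBasis_mem_Delta_iff hπ]
  exact (vle_zpow hπ).mpr ht

theorem toSubmodule_DeltaAlg (hπ : Irreducible π) (a : Fin n → ℤ) :
    Subalgebra.toSubmodule (DeltaAlg (K := K) hπ a) =
      Submodule.span R (Set.range fun q : Fin n × Fin n =>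
        Matrix.single q.1 q.2 ((algebraMap R K π) ^ (a q.1 - a q.2))) := by
  apply le_antisymm
  · intro X hX
    have hX' : X ∈ Delta R K π a := hX
    rw [mem_Delta_iff] at hX'
    rw [matrix_eq_sum_single X]
    refine Submodule.sum_mem _ fun i _ => Submodule.sum_mem _ fun j _ => ?_
    obtain ⟨r, hr⟩ := hX' i j
    have hp := hp_ne_zero (K := K) hπ
    have hXij : X i j = r • ((algebraMap R K π) ^ (a i - a j)) := by
      rw [Algebra.smul_def, hr, mul_comm, ← mul_assoc, ← zpow_add₀ hp, add_neg_cancel,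
        zpow_zero, one_mul]
    rw [hXij, ← smul_single]
    exact Submodule.smul_mem _ r (Submodule.subset_span ⟨(i, j), rfl⟩)
  · rw [Submodule.span_le]
    rintro _ ⟨q, rfl⟩
    exact stdBasis_zpow_mem_Delta hπ a q.1 q.2 le_rfl

theorem isOrder_DeltaAlg (hπ : Irreducible π) (a : Fin n → ℤ) :
    IsOrder R K (DeltaAlg (K := K) hπ a) := by
  constructor
  · rw [toSubmodule_DeltaAlg hπ a]
    exact Submodule.fg_span (Set.finite_range _)
  · rw [eq_top_iff]
    intro X _
    have hp := hp_ne_zero (K := K) hπ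
    rw [matrix_eq_sum_single X]
    refine Submodule.sum_mem _ fun i _ => Submodule.sum_mem _ fun j _ => ?_
    have hXij : Matrix.single i j (X i j)
        = (X i j * (algebraMap R K π) ^ (-(a i - a j))) •
          Matrix.single i j ((algebraMap R K π) ^ (a i - a j)) := by
      rw [smul_single, smul_eq_mul, mul_assoc, ← zpow_add₀ hp, neg_add_cancel,
        zpow_zero, mul_one]
    rw [hXij]
    exact Submodule.smul_mem _ _ (Submodule.subset_span
      (stdBasis_zpow_mem_Delta hπ a i j le_rfl))

theorem exists_bound_of_FG (hπ : Irreducible π) {D : Subalgebra R (Matrix (Fin n) (Fin n) K)}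
    (hFG : (Subalgebra.toSubmodule D).FG) :
    ∃ N : ℤ, ∀ X ∈ D, ∀ i j, vle π N (X i j) := by
  obtain ⟨s, hs⟩ := hFG
  have key : ∀ A : Matrix (Fin n) (Fin n) K, ∃ N : ℤ, ∀ i j, vle π N (A i j) := by
    intro A
    choose v hv using fun q : Fin n × Fin n => exists_vle hπ (A q.1 q.2)
    obtain ⟨N, hN⟩ := exists_forall_le Finset.univ v
    exact ⟨N, fun i j => vle_of_le hπ (hN (i, j) (Finset.mem_univ _)) (hv (i, j))⟩
  choose NA hNA using key
  obtain ⟨N, hN⟩ := exists_forall_le s NA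
  refine ⟨N, fun X hX => ?_⟩
  have hX' : X ∈ Submodule.span R (s : Set (Matrix (Fin n) (Fin n) K)) := by
    rw [hs]
    exact hX
  refine Submodule.span_induction
    (p := fun X _ => ∀ i j, vle π N (X i j)) ?_ ?_ ?_ ?_ hX'
  · intro g hg i j
    exact vle_of_le hπ (hN g hg) (hNA g i j)
  · intro i j
    simpa using vle_zero (π := π) N
  · intro x y _ _ hx hy i j
    simpa using vle_add hπ (hx i j) (hy i j)
  · intro r x _ hx i j
    have : (r • x) i j = algebraMap R K r * x i j := by
      simp [Algebra.smul_def]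
    rw [this, ← zero_add N]
    exact vle_mul hπ (vle_algebraMap r) (hx i j)

theorem deltaAlg_maximal (hπ : Irreducible π) (b : Fin n → ℤ) :
    IsMaximalOrder R K (DeltaAlg (K := K) hπ b) := by
  refine ⟨isOrder_DeltaAlg hπ b, fun D' hD' hle => ?_⟩
  refine le_antisymm ?_ hle
  intro X hX
  show X ∈ Delta R K π b
  rw [mem_Delta_iff]
  intro i j
  by_contra hvle
  have hp := hp_ne_zero (K := K) hπ
  obtain ⟨N, hN⟩ := exists_bound_of_FG hπ hD'.1
  have hx0 : X i j ≠ 0 := fun h => hvle (h ▸ vle_zero _)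
  obtain ⟨m, u, hxu⟩ := exists_exact hπ hx0
  have hm : m ≤ b i - b j - 1 := by
    have h2 : ¬ (b i - b j ≤ m) := fun hle2 =>
      hvle (hxu ▸ (vle_unit_zpow hπ u m _).mpr hle2)
    omega
  have h1 : Matrix.single i i (1 : K) ∈ D' := hle (E_mem_Delta hπ b i)
  have h2 : Matrix.single j j (1 : K) ∈ D' := hle (E_mem_Delta hπ b j)
  have h3 : Matrix.single j i ((algebraMap R K π) ^ (b j - b i)) ∈ D' :=
    hle (stdBasis_zpow_mem_Delta hπ b j i le_rfl)
  have h4 : Matrix.single i j (X i j) ∈ D' := by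
    rw [← E_mul_mul_E]
    exact mul_mem (mul_mem h1 hX) h2
  have hw : Matrix.single i i (X i j * (algebraMap R K π) ^ (b j - b i)) ∈ D' := by
    rw [← Matrix.single_mul_single_same (i := i) (j := j) (k := i)]
    exact mul_mem h4 h3
  set y : K := X i j * (algebraMap R K π) ^ (b j - b i) with hy
  have hyu : y = algebraMap R K u * (algebraMap R K π) ^ (m + (b j - b i)) := by
    rw [hy, hxu, mul_assoc, ← zpow_add₀ hp]
  set e : ℤ := m + (b j - b i) with he
  have hee : e ≤ -1 := by omega
  set k : ℕ := N.natAbs + 1 with hk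
  have hpow : Matrix.single i i (y ^ k) ∈ D' := by
    rw [← stdBasis_pow i y k (by omega)]
    exact pow_mem hw k
  have hvleN : vle π N (y ^ k) := by
    have := hN _ hpow i i
    rwa [Matrix.single_apply_same] at this
  have hyk : y ^ k = algebraMap R K (↑(u ^ k) : R) * (algebraMap R K π) ^ (e * (k : ℤ)) := by
    rw [hyu, mul_pow, Units.val_pow_eq_pow_val, map_pow, ← zpow_natCast
      ((algebraMap R K π) ^ e) k, ← _root_.zpow_mul]
  rw [hyk] at hvleN
  have hNle : N ≤ e * (k : ℤ) := (vle_unit_zpow hπ (u ^ k) _ _).mp hvleN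
  have hk1 : e * (k : ℤ) ≤ -1 * (k : ℤ) :=
    mul_le_mul_of_nonneg_right hee (by positivity)
  omega


theorem exists_delta_of_maximal (hπ : Irreducible π) (hn : 1 ≤ n) (a : Fin n → ℤ)
    {D : Subalgebra R (Matrix (Fin n) (Fin n) K)} (hD : IsMaximalOrder R K D)
    (hsub : Delta R K π (0 : Fin n → ℤ) ∩ Delta R K π a ⊆
      (D : Set (Matrix (Fin n) (Fin n) K))) :
    ∃ b : Fin n → ℤ, (D : Set (Matrix (Fin n) (Fin n) K)) = Delta R K π b := by
  obtain ⟨N, hN⟩ := exists_bound_of_FG hπ hD.1.1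
  have hp := hp_ne_zero (K := K) hπ
  have hE : ∀ i, Matrix.single i i (1 : K) ∈ D := fun i =>
    hsub ⟨E_mem_Delta hπ _ i, E_mem_Delta hπ a i⟩
  have hleast : ∀ i j : Fin n, ∃ m : ℤ,
      (∃ u : Rˣ, ∃ X ∈ D, X i j = algebraMap R K u * (algebraMap R K π) ^ m) ∧
      ∀ m' : ℤ, (∃ u : Rˣ, ∃ X ∈ D, X i j = algebraMap R K u * (algebraMap R K π) ^ m')
        → m ≤ m' := by
    intro i j
    obtain ⟨lb, h1, h2⟩ := Int.exists_least_of_bdd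
      (P := fun m => ∃ u : Rˣ, ∃ X ∈ D, X i j = algebraMap R K u * (algebraMap R K π) ^ m)
      ⟨N, fun z ⟨u, X, hX, hXij⟩ =>
        (vle_unit_zpow hπ u z N).mp (hXij ▸ hN X hX i j)⟩
      ⟨max (a i - a j) 0, 1, Matrix.single i j ((algebraMap R K π) ^ (max (a i - a j) 0)),
        hsub ⟨stdBasis_zpow_mem_Delta hπ _ i j (by simp), 
          stdBasis_zpow_mem_Delta hπ a i j (le_max_left _ _)⟩,
        by rw [Matrix.single_apply_same, Units.val_one, _root_.map_one, one_mul]⟩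
    exact ⟨lb, h1, h2⟩
  choose m hm1 hm2 using hleast
  have key : ∀ X ∈ D, ∀ i j, vle π (m i j) (X i j) := by
    intro X hX i j
    by_cases h0 : X i j = 0
    · rw [h0]
      exact vle_zero _
    · obtain ⟨t, u, hxu⟩ := exists_exact hπ h0
      have := hm2 i j t ⟨u, X, hX, hxu⟩
      rw [hxu]
      exact (vle_unit_zpow hπ u t _).mpr this
  have hmemE : ∀ (Y : Matrix (Fin n) (Fin n) K), Y ∈ D → ∀ i j,
      Matrix.single i j (Y i j) ∈ D := by
    intro Y hY i j
    rw [← E_mul_mul_E]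
    exact mul_mem (mul_mem (hE i) hY) (hE j)
  have subadd : ∀ i k j : Fin n, m i j ≤ m i k + m k j := by
    intro i k j
    obtain ⟨u, Y, hY, hYik⟩ := hm1 i k
    obtain ⟨v, Z, hZ, hZkj⟩ := hm1 k j
    refine hm2 i j _ ⟨u * v, Matrix.single i k (Y i k) * Matrix.single k j (Z k j),
      mul_mem (hmemE Y hY i k) (hmemE Z hZ k j), ?_⟩
    rw [Matrix.single_mul_single_same, Matrix.single_apply_same, hYik, hZkj,
      Units.val_mul, _root_.map_mul, _root_.zpow_add₀ hp]
    ring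
  have mii : ∀ i, m i i = 0 := by
    intro i
    have h1 : m i i ≤ 0 := hm2 i i 0 ⟨1, Matrix.single i i (1 : K), hE i,
      by rw [Matrix.single_apply_same, Units.val_one, _root_.map_one, one_mul,
        zpow_zero]⟩
    have h2 := subadd i i i
    omega
  set i0 : Fin n := ⟨0, hn⟩
  refine ⟨fun i => m i i0, ?_⟩
  have hDle : D ≤ DeltaAlg (K := K) hπ (fun i => m i i0) := by
    intro X hX
    show X ∈ Delta R K π _
    rw [mem_Delta_iff]
    intro i j
    refine vle_of_le hπ ?_ (key X hX i j)
    have := subadd i j i0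
    omega
  rw [← hD.2 (DeltaAlg (K := K) hπ (fun i => m i i0)) (isOrder_DeltaAlg hπ _) hDle]
  rfl


theorem Delta_congr {b c : Fin n → ℤ} (h : ∀ i j, b i - b j = c i - c j) :
    Delta R K π b = Delta R K π c := by
  unfold Delta
  ext X
  simp only [Set.mem_setOf_eq]
  constructor <;> intro hX i j
  · rw [show c j - c i = b j - b i from (h j i).symm]
    exact hX i j
  · rw [show b j - b i = c j - c i from h j i]
    exact hX i j

theorem inter_exponents (hπ : Irreducible π) {b c d e : Fin n → ℤ}
    (h : Delta R K π b ∩ Delta R K π c = Delta R K π d ∩ Delta R K π e) (i j : Fin n) :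
    max (b i - b j) (c i - c j) = max (d i - d j) (e i - e j) := by
  have mem_iff : ∀ (f g : Fin n → ℤ) (s : ℤ),
      Matrix.single i j ((algebraMap R K π) ^ s) ∈ Delta R K π f ∩ Delta R K π g ↔
        max (f i - f j) (g i - g j) ≤ s := by
    intro f g s
    rw [Set.mem_inter_iff, stdBasis_mem_Delta_iff hπ, stdBasis_mem_Delta_iff hπ,
      vle_zpow hπ, vle_zpow hπ, max_le_iff]
  apply le_antisymm
  · have h1 := (mem_iff d e (max (d i - d j) (e i - e j))).mpr le_rfl
    rw [← h] at h1
    exact (mem_iff b c _).mp h1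
  · have h1 := (mem_iff b c (max (b i - b j) (c i - c j))).mpr le_rfl
    rw [h] at h1
    exact (mem_iff d e _).mp h1

theorem comb {a b c : Fin n → ℤ} (hmono : Monotone a)
    (h : ∀ i j, max (b i - b j) (c i - c j) = max 0 (a i - a j)) :
    (∀ i j, b i - b j = 0 ∧ c i - c j = a i - a j) ∨
    (∀ i j, c i - c j = 0 ∧ b i - b j = a i - a j) := by
  have pair : ∀ i j : Fin n, i ≤ j →
      (b j - b i = 0 ∧ c j - c i = a j - a i) ∨
      (c j - c i = 0 ∧ b j - b i = a j - a i) := by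
    intro i j hij
    have H1 := h i j
    have H2 := h j i
    have ha := hmono hij
    omega
  have bmono : ∀ i j : Fin n, i ≤ j → b i ≤ b j := by
    intro i j hij
    have H1 := h i j
    have ha := hmono hij
    omega
  have cmono : ∀ i j : Fin n, i ≤ j → c i ≤ c j := by
    intro i j hij
    have H1 := h i j
    have ha := hmono hij
    omega
  by_cases hb : ∀ i j : Fin n, i ≤ j → b i = b j
  · left
    intro i j
    rcases le_total i j with hij | hij
    · have hbij := hb i j hij
      rcases pair i j hij with ⟨h1, h2⟩ | ⟨h1, h2⟩ <;> omega
    · have hbij := hb j i hij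
      rcases pair j i hij with ⟨h1, h2⟩ | ⟨h1, h2⟩ <;> omega
  · push_neg at hb
    obtain ⟨p, q, hpq, hbpq⟩ := hb
    right
    have hbpq' : b p < b q := lt_of_le_of_ne (bmono p q hpq) hbpq
    have main : ∀ i j : Fin n, i ≤ j → c i = c j ∧ b j - b i = a j - a i := by
      intro i j hij
      rcases pair i j hij with ⟨h1, h2⟩ | ⟨h1, h2⟩
      · by_cases haij : a i = a j
        · constructor <;> omega
        · exfalso
          have haij' : a i < a j := lt_of_le_of_ne (hmono hij) haij
          have hcij : c i < c j := by omega
          set l : Fin n := min i p with hl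
          set r : Fin n := max j q with hr
          have hlr : l ≤ r := le_trans (min_le_left i p) (le_trans hij (le_max_left j q))
          have hbl : b l ≤ b p := bmono l p (min_le_right i p)
          have hbr : b q ≤ b r := bmono q r (le_max_right j q)
          have hcl : c l ≤ c i := cmono l i (min_le_left i p)
          have hcr : c j ≤ c r := cmono j r (le_max_left j q)
          rcases pair l r hlr with ⟨e1, e2⟩ | ⟨e1, e2⟩ <;> omega
      · constructor <;> omega
    intro i j
    rcases le_total i j with hij | hij
    · have := main i j hij
      omega
    · have := main j i hij
      omega

end MatrixAux


/-- Let `Δ = Δ_0 ∩ Δ_a` (a totally positive normalized) and let `μ` be a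
`K`-algebra automorphism of `Mₙ(K)` mapping the set of (underlying sets of) maximal `R`-orders
containing `Δ` bijectively onto itself. Then `μ` fixes both `Δ_0` and `Δ_a`, or swaps them. -/
theorem stmt6 (π : R) (hπ : Irreducible π) (n : ℕ) (hn : 1 ≤ n)
    (a : Fin n → ℤ) (ha0 : a ⟨0, hn⟩ = 0) (hmono : Monotone a)
    (μ : Matrix (Fin n) (Fin n) K ≃ₐ[K] Matrix (Fin n) (Fin n) K)
    (hμ : Set.BijOn (fun S => ⇑μ '' S)
      {S : Set (Matrix (Fin n) (Fin n) K) |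
        (∃ D : Subalgebra R (Matrix (Fin n) (Fin n) K),
          IsMaximalOrder R K D ∧ (D : Set (Matrix (Fin n) (Fin n) K)) = S) ∧
        Delta R K π (0 : Fin n → ℤ) ∩ Delta R K π a ⊆ S}
      {S : Set (Matrix (Fin n) (Fin n) K) |
        (∃ D : Subalgebra R (Matrix (Fin n) (Fin n) K),
          IsMaximalOrder R K D ∧ (D : Set (Matrix (Fin n) (Fin n) K)) = S) ∧
        Delta R K π (0 : Fin n → ℤ) ∩ Delta R K π a ⊆ S}) :
    (⇑μ '' Delta R K π (0 : Fin n → ℤ) = Delta R K π (0 : Fin n → ℤ) ∧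
      ⇑μ '' Delta R K π a = Delta R K π a) ∨
    (⇑μ '' Delta R K π (0 : Fin n → ℤ) = Delta R K π a ∧
      ⇑μ '' Delta R K π a = Delta R K π (0 : Fin n → ℤ)) := by
  have hmem0 : Delta R K π (0 : Fin n → ℤ) ∈
      {S : Set (Matrix (Fin n) (Fin n) K) |
        (∃ D : Subalgebra R (Matrix (Fin n) (Fin n) K),
          IsMaximalOrder R K D ∧ (D : Set (Matrix (Fin n) (Fin n) K)) = S) ∧
        Delta R K π (0 : Fin n → ℤ) ∩ Delta R K π a ⊆ S} :=
    ⟨⟨DeltaAlg hπ (0 : Fin n → ℤ), deltaAlg_maximal hπ _, rfl⟩, Set.inter_subset_left⟩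
  have hmema : Delta R K π a ∈
      {S : Set (Matrix (Fin n) (Fin n) K) |
        (∃ D : Subalgebra R (Matrix (Fin n) (Fin n) K),
          IsMaximalOrder R K D ∧ (D : Set (Matrix (Fin n) (Fin n) K)) = S) ∧
        Delta R K π (0 : Fin n → ℤ) ∩ Delta R K π a ⊆ S} :=
    ⟨⟨DeltaAlg hπ a, deltaAlg_maximal hπ _, rfl⟩, Set.inter_subset_right⟩
  obtain ⟨⟨D0, hD0max, hD0eq⟩, hsub0⟩ := hμ.mapsTo hmem0
  obtain ⟨⟨Da, hDamax, hDaeq⟩, hsuba⟩ := hμ.mapsTo hmema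
  obtain ⟨b, hb⟩ := exists_delta_of_maximal hπ hn a hD0max (hD0eq ▸ hsub0)
  obtain ⟨c, hc⟩ := exists_delta_of_maximal hπ hn a hDamax (hDaeq ▸ hsuba)
  have him0 : ⇑μ '' Delta R K π (0 : Fin n → ℤ) = Delta R K π b := by
    rw [← hb]; exact hD0eq.symm
  have hima : ⇑μ '' Delta R K π a = Delta R K π c := by
    rw [← hc]; exact hDaeq.symm
  obtain ⟨S0, hS0T, hS0eq⟩ := hμ.surjOn hmem0
  obtain ⟨Sa, hSaT, hSaeq⟩ := hμ.surjOn hmema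
  have hsubD0 : ⇑μ '' (Delta R K π (0 : Fin n → ℤ) ∩ Delta R K π a)
      ⊆ Delta R K π (0 : Fin n → ℤ) :=
    (Set.image_mono (f := ⇑μ) hS0T.2).trans (subset_of_eq hS0eq)
  have hsubDa : ⇑μ '' (Delta R K π (0 : Fin n → ℤ) ∩ Delta R K π a)
      ⊆ Delta R K π a :=
    (Set.image_mono (f := ⇑μ) hSaT.2).trans (subset_of_eq hSaeq)
  have himInter : ⇑μ '' (Delta R K π (0 : Fin n → ℤ) ∩ Delta R K π a)
      = Delta R K π b ∩ Delta R K π c := by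
    rw [Set.image_inter μ.injective, him0, hima]
  have hinter : Delta R K π b ∩ Delta R K π c
      = Delta R K π (0 : Fin n → ℤ) ∩ Delta R K π a := by
    apply Set.Subset.antisymm
    · rw [← himInter]
      exact Set.subset_inter hsubD0 hsubDa
    · exact Set.subset_inter (him0 ▸ hsub0) (hima ▸ hsuba)
  have hexp : ∀ i j, max (b i - b j) (c i - c j) = max 0 (a i - a j) := by
    intro i j
    have := inter_exponents hπ hinter i j
    simpa using this
  rcases comb hmono hexp with h | h
  · left
    constructor
    · rw [him0]
      exact Delta_congr fun i j => by simpa using (h i j).1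
    · rw [hima]
      exact Delta_congr fun i j => (h i j).2
  · right
    constructor
    · rw [him0]
      exact Delta_congr fun i j => (h i j).2
    · rw [hima]
      exact Delta_congr fun i j => by simpa using (h i j).1
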